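/- Let k ≥ 2 and consider distinct points x₁, …, xₐ on the x-axis and y₁, …, y_b on the y-axis of the nodal curve xy = 0 in 𝔸², with all points nonzero, and a + b = k. Then the mixed Vandermonde determinant G_{j} evaluated at the k points ((x₁,0),…,(xₐ,0),(0,y₁),…,(0,y_b)) (with the xy-coordinates of each point substituted into Vᵏⱼ) is nonzero if and only if j = b or j = b+1, i.e. Vᵏⱼ is singular at such a configuration unless j ∈ {b, b+1}. -/

import Mathlib

open Matrix Finset

lemma det_eq_zero_pigeonhole {k : ℕ} (M : Matrix (Fin k) (Fin k) ℂ) (S T : Finset (Fin k))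
    (hcard : T.card < S.card)
    (h : ∀ r ∈ S, ∀ c ∉ T, M r c = 0) : M.det = 0 := by
  rw [Matrix.det_apply]
  refine Finset.sum_eq_zero fun σ _ => ?_
  have hex : ∃ c, c ∉ T ∧ σ c ∈ S := by
    by_contra hcon
    push_neg at hcon
    have hsub : S ⊆ T.image σ := by
      intro r hr
      have h1 : σ (σ.symm r) = r := σ.apply_symm_apply r
      have hm : σ.symm r ∈ T := by
        by_contra hnt
        exact absurd (h1 ▸ hcon _ hnt) (by simp [hr])
      exact Finset.mem_image.2 ⟨_, hm, h1⟩
    have h2 := Finset.card_le_card hsub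
    have h3 := Finset.card_image_le (s := T) (f := σ)
    omega
  obtain ⟨c, hcT, hcS⟩ := hex
  have hz : (∏ i, M (σ i) i) = 0 :=
    Finset.prod_eq_zero (Finset.mem_univ c) (h _ hcS _ hcT)
  rw [hz, smul_zero]

theorem stmt_14' (k a b j : ℕ) (hk : 2 ≤ k) (hab : a + b = k) (hj1 : 1 ≤ j) (hjk : j ≤ k)
    (x : Fin a → ℂ) (y : Fin b → ℂ)
    (hxinj : Function.Injective x) (hyinj : Function.Injective y)
    (hx0 : ∀ l, x l ≠ 0) (hy0 : ∀ l, y l ≠ 0)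
    (p : Fin k → ℂ × ℂ)
    (hp : ∀ c : Fin k, p c = if h : (c : ℕ) < a then (x ⟨c, h⟩, 0)
      else (0, y ⟨(c : ℕ) - a, Nat.sub_lt_left_of_lt_add (by omega) (by omega)⟩))
    (hcon : j < b ∨ b + 1 < j) :
    (Matrix.of fun r c : Fin k =>
        if (r : ℕ) ≤ k - j then (p c).1 ^ (r : ℕ) else (p c).2 ^ ((r : ℕ) - (k - j))).det = 0 := by
  have hpx : ∀ (c : Fin k) (h : (c : ℕ) < a), p c = (x ⟨c, h⟩, 0) := by
    intro c h; rw [hp, dif_pos h]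
  have hpy : ∀ (c : Fin k) (h : ¬ ((c : ℕ) < a)), p c = (0, y ⟨(c : ℕ) - a, Nat.sub_lt_left_of_lt_add (by omega) (by omega)⟩) := by
    intro c h; rw [hp, dif_neg h]
  rcases hcon with hlt | hgt
  · refine det_eq_zero_pigeonhole _
      ((Finset.univ : Finset (Fin (k - j))).map
        ⟨fun i : Fin (k - j) => (⟨(i : ℕ) + 1, by have := i.isLt; omega⟩ : Fin k),
          fun u v huv => by simpa [Fin.ext_iff] using huv⟩)
      ((Finset.univ : Finset (Fin a)).map
        ⟨fun i : Fin a => (⟨(i : ℕ), by have := i.isLt; omega⟩ : Fin k),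
          fun u v huv => by simpa [Fin.ext_iff] using huv⟩)
      (by simp; omega) ?_
    intro r hr c hc
    simp only [Finset.mem_map, Finset.mem_univ, Function.Embedding.coeFn_mk, true_and] at hr hc
    push_neg at hc
    obtain ⟨i, hi⟩ := hr
    have hca : ¬ ((c : ℕ) < a) := fun hlt' => hc ⟨(c : ℕ), hlt'⟩ (Fin.ext rfl)
    have hr1 : (r : ℕ) = (i : ℕ) + 1 := by rw [← hi]; rfl
    have hile := i.isLt
    simp only [Matrix.of_apply]
    rw [if_pos (by omega : (r : ℕ) ≤ k - j), hpy c hca]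
    simp [hr1]
  · refine det_eq_zero_pigeonhole _
      ((Finset.univ : Finset (Fin (j - 1))).map
        ⟨fun i : Fin (j - 1) => (⟨k - j + 1 + (i : ℕ), by have := i.isLt; omega⟩ : Fin k),
          fun u v huv => by simpa [Fin.ext_iff] using huv⟩)
      ((Finset.univ : Finset (Fin b)).map
        ⟨fun i : Fin b => (⟨a + (i : ℕ), by have := i.isLt; omega⟩ : Fin k),
          fun u v huv => by simpa [Fin.ext_iff] using huv⟩)
      (by simp; omega) ?_
    intro r hr c hc
    simp only [Finset.mem_map, Finset.mem_univ, Function.Embedding.coeFn_mk, true_and] at hr hc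
    push_neg at hc
    obtain ⟨i, hi⟩ := hr
    have hca : (c : ℕ) < a := by
      by_contra hge
      have hcb : (c : ℕ) - a < b := by have := c.isLt; omega
      exact hc ⟨(c : ℕ) - a, hcb⟩ (Fin.ext (by show a + ((c : ℕ) - a) = (c : ℕ); omega))
    have hr1 : (r : ℕ) = k - j + 1 + (i : ℕ) := by rw [← hi]; rfl
    have hile := i.isLt
    simp only [Matrix.of_apply]
    rw [if_neg (by omega : ¬ ((r : ℕ) ≤ k - j)), hpx c hca]
    have : (r : ℕ) - (k - j) ≠ 0 := by omega
    simp [this]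


lemma det_ne_zero_of_submatrix {ι : Type} [Fintype ι] [DecidableEq ι] {k : ℕ}
    (M : Matrix (Fin k) (Fin k) ℂ) (er ec : ι ≃ Fin k)
    (h : (M.submatrix er ec).det ≠ 0) : M.det ≠ 0 := by
  have he : M.submatrix er ec = (M.submatrix er er).submatrix id (ec.trans er.symm) := by
    ext i j
    simp [Matrix.submatrix_apply]
  rw [he, Matrix.det_permute', Matrix.det_submatrix_equiv_self] at h
  intro h0
  rw [h0, mul_zero] at h
  exact h rfl

noncomputable def sumEquiv {m n k : ℕ} (f : Fin m ⊕ Fin n → Fin k) (hmn : m + n = k)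
    (hf : Function.Injective f) : Fin m ⊕ Fin n ≃ Fin k :=
  Equiv.ofBijective f ((Fintype.bijective_iff_injective_and_card f).2 ⟨hf, by simp [hmn]⟩)

@[simp] lemma sumEquiv_apply {m n k : ℕ} (f : Fin m ⊕ Fin n → Fin k) (hmn : m + n = k)
    (hf : Function.Injective f) (i : Fin m ⊕ Fin n) : sumEquiv f hmn hf i = f i := rfl

theorem stmt_14c (k a b j : ℕ) (hk : 2 ≤ k) (hab : a + b = k) (hj1 : 1 ≤ j) (hjk : j ≤ k)
    (x : Fin a → ℂ) (y : Fin b → ℂ)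
    (hxinj : Function.Injective x) (hyinj : Function.Injective y)
    (hx0 : ∀ l, x l ≠ 0) (hy0 : ∀ l, y l ≠ 0)
    (p : Fin k → ℂ × ℂ)
    (hpx : ∀ (c : Fin k) (h : (c : ℕ) < a), p c = (x ⟨c, h⟩, 0))
    (hpy : ∀ (c : Fin k) (h : ¬ ((c : ℕ) < a)), p c = (0, y ⟨(c : ℕ) - a, Nat.sub_lt_left_of_lt_add (by omega) (by omega)⟩))
    (hj : j = b + 1) :
    (Matrix.of fun r c : Fin k =>
        if (r : ℕ) ≤ k - j then (p c).1 ^ (r : ℕ) else (p c).2 ^ ((r : ℕ) - (k - j))).det ≠ 0 := by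
  set M : Matrix (Fin k) (Fin k) ℂ := Matrix.of fun r c : Fin k =>
      if (r : ℕ) ≤ k - j then (p c).1 ^ (r : ℕ) else (p c).2 ^ ((r : ℕ) - (k - j)) with hMdef
  have ha1 : 1 ≤ a := by omega
  have hkj : k - j = a - 1 := by omega
  have hMx : ∀ (r c : Fin k) (h : (c : ℕ) < a), M r c =
      (if (r : ℕ) ≤ k - j then x ⟨(c : ℕ), h⟩ ^ (r : ℕ) else (0 : ℂ) ^ ((r : ℕ) - (k - j))) := by
    intro r c h
    simp only [hMdef, Matrix.of_apply, hpx c h]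
  have hMy : ∀ (r c : Fin k) (h : ¬ ((c : ℕ) < a)), M r c =
      (if (r : ℕ) ≤ k - j then (0 : ℂ) ^ (r : ℕ)
        else y ⟨(c : ℕ) - a, Nat.sub_lt_left_of_lt_add (by omega) (by omega)⟩ ^ ((r : ℕ) - (k - j))) := by
    intro r c h
    simp only [hMdef, Matrix.of_apply, hpy c h]
  let f : Fin a ⊕ Fin b → Fin k :=
    Sum.elim (fun i => ⟨(i : ℕ), by have := i.isLt; omega⟩)
      (fun i => ⟨a + (i : ℕ), by have := i.isLt; omega⟩)
  have hf : Function.Injective f := by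
    intro u v huv
    rcases u with i | i <;> rcases v with i' | i' <;>
      simp only [f, Sum.elim_inl, Sum.elim_inr, Fin.mk.injEq] at huv
    · exact congrArg Sum.inl (Fin.ext huv)
    · exfalso; have := i.isLt; omega
    · exfalso; have := i'.isLt; omega
    · exact congrArg Sum.inr (Fin.ext (by omega))
  apply det_ne_zero_of_submatrix _ (sumEquiv f hab hf) (sumEquiv f hab hf)
  have hN : M.submatrix (sumEquiv f hab hf) (sumEquiv f hab hf) = fromBlocks
      (Matrix.of fun r c : Fin a => x c ^ (r : ℕ))
      ((M.submatrix (sumEquiv f hab hf) (sumEquiv f hab hf)).toBlocks₁₂) 0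
      (Matrix.of fun r c : Fin b => y c ^ ((r : ℕ) + 1)) := by
    ext i jj
    rcases i with r | r <;> rcases jj with c | c
    · -- block 11 : rows < a, x-columns
      have hrv : ((sumEquiv f hab hf (Sum.inl r) : Fin k) : ℕ) = (r : ℕ) := rfl
      have hcv : ((sumEquiv f hab hf (Sum.inl c) : Fin k) : ℕ) = (c : ℕ) := rfl
      rw [Matrix.submatrix_apply, Matrix.fromBlocks_apply₁₁,
        hMx _ _ (by rw [hcv]; exact c.isLt),
        if_pos (by rw [hrv]; have := r.isLt; omega)]
      rw [Matrix.of_apply, hrv]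
      refine congrArg (· ^ (r : ℕ)) ?_
      exact congrArg x (Fin.ext (by rw [Fin.val_mk, hcv]))
    · -- block 12 : arbitrary, equals toBlocks₁₂ by definition
      simp [Matrix.toBlocks₁₂]
    · -- block 21 : rows ≥ a, x-columns : zero
      have hrv : ((sumEquiv f hab hf (Sum.inr r) : Fin k) : ℕ) = a + (r : ℕ) := rfl
      have hcv : ((sumEquiv f hab hf (Sum.inl c) : Fin k) : ℕ) = (c : ℕ) := rfl
      rw [Matrix.submatrix_apply, Matrix.fromBlocks_apply₂₁,
        hMx _ _ (by rw [hcv]; exact c.isLt),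
        if_neg (by rw [hrv]; omega)]
      rw [Matrix.zero_apply, hrv]
      exact zero_pow (by omega)
    · -- block 22 : rows ≥ a, y-columns
      have hrv : ((sumEquiv f hab hf (Sum.inr r) : Fin k) : ℕ) = a + (r : ℕ) := rfl
      have hcv : ((sumEquiv f hab hf (Sum.inr c) : Fin k) : ℕ) = a + (c : ℕ) := rfl
      rw [Matrix.submatrix_apply, Matrix.fromBlocks_apply₂₂,
        hMy _ _ (by rw [hcv]; omega),
        if_neg (by rw [hrv]; omega)]
      rw [Matrix.of_apply, hrv,
        show a + (r : ℕ) - (k - j) = (r : ℕ) + 1 from by omega]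
      refine congrArg (· ^ ((r : ℕ) + 1)) ?_
      exact congrArg y (Fin.ext (by rw [Fin.val_mk, hcv]; omega))
  rw [hN, Matrix.det_fromBlocks_zero₂₁]
  refine mul_ne_zero ?_ ?_
  · have hA : (Matrix.of fun r c : Fin a => x c ^ (r : ℕ)) = (Matrix.vandermonde x)ᵀ := by
      ext i jj; simp [Matrix.vandermonde]
    rw [hA, Matrix.det_transpose]
    exact Matrix.det_vandermonde_ne_zero_iff.2 hxinj
  · have hD : (Matrix.of fun r c : Fin b => y c ^ ((r : ℕ) + 1)) =
        Matrix.of (fun r c : Fin b => y c * (Matrix.vandermonde y)ᵀ r c) := by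
      ext i jj; simp [Matrix.vandermonde, pow_succ]; ring
    rw [hD, Matrix.det_mul_row, Matrix.det_transpose]
    exact mul_ne_zero (Finset.prod_ne_zero_iff.2 fun i _ => hy0 i)
      (Matrix.det_vandermonde_ne_zero_iff.2 hyinj)

theorem stmt_14b (k a b j : ℕ) (hk : 2 ≤ k) (hab : a + b = k) (hj1 : 1 ≤ j) (hjk : j ≤ k)
    (x : Fin a → ℂ) (y : Fin b → ℂ)
    (hxinj : Function.Injective x) (hyinj : Function.Injective y)
    (hx0 : ∀ l, x l ≠ 0) (hy0 : ∀ l, y l ≠ 0)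
    (p : Fin k → ℂ × ℂ)
    (hpx : ∀ (c : Fin k) (h : (c : ℕ) < a), p c = (x ⟨c, h⟩, 0))
    (hpy : ∀ (c : Fin k) (h : ¬ ((c : ℕ) < a)), p c = (0, y ⟨(c : ℕ) - a, Nat.sub_lt_left_of_lt_add (by omega) (by omega)⟩))
    (hj : j = b) :
    (Matrix.of fun r c : Fin k =>
        if (r : ℕ) ≤ k - j then (p c).1 ^ (r : ℕ) else (p c).2 ^ ((r : ℕ) - (k - j))).det ≠ 0 := by
  set M : Matrix (Fin k) (Fin k) ℂ := Matrix.of fun r c : Fin k =>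
      if (r : ℕ) ≤ k - j then (p c).1 ^ (r : ℕ) else (p c).2 ^ ((r : ℕ) - (k - j)) with hMdef
  have hb1 : 1 ≤ b := by omega
  have hkj : k - j = a := by omega
  have hMx : ∀ (r c : Fin k) (h : (c : ℕ) < a), M r c =
      (if (r : ℕ) ≤ k - j then x ⟨(c : ℕ), h⟩ ^ (r : ℕ) else (0 : ℂ) ^ ((r : ℕ) - (k - j))) := by
    intro r c h
    simp only [hMdef, Matrix.of_apply, hpx c h]
  have hMy : ∀ (r c : Fin k) (h : ¬ ((c : ℕ) < a)), M r c =
      (if (r : ℕ) ≤ k - j then (0 : ℂ) ^ (r : ℕ)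
        else y ⟨(c : ℕ) - a, Nat.sub_lt_left_of_lt_add (by omega) (by omega)⟩ ^ ((r : ℕ) - (k - j))) := by
    intro r c h
    simp only [hMdef, Matrix.of_apply, hpy c h]
  have hba : b + a = k := by omega
  let fr : Fin b ⊕ Fin a → Fin k :=
    Sum.elim (fun i => ⟨if (i : ℕ) = 0 then 0 else a + (i : ℕ), by have := i.isLt; split <;> omega⟩)
      (fun i => ⟨(i : ℕ) + 1, by have := i.isLt; omega⟩)
  have hfr : Function.Injective fr := by
    intro u v huv
    rcases u with i | i <;> rcases v with i' | i' <;>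
      simp only [fr, Sum.elim_inl, Sum.elim_inr, Fin.mk.injEq] at huv
    · exact congrArg Sum.inl (Fin.ext (by split_ifs at huv <;> omega))
    · exfalso; have := i'.isLt; split_ifs at huv <;> omega
    · exfalso; have := i.isLt; split_ifs at huv <;> omega
    · exact congrArg Sum.inr (Fin.ext (by omega))
  let fc : Fin b ⊕ Fin a → Fin k :=
    Sum.elim (fun i => ⟨a + (i : ℕ), by have := i.isLt; omega⟩)
      (fun i => ⟨(i : ℕ), by have := i.isLt; omega⟩)
  have hfc : Function.Injective fc := by
    intro u v huv
    rcases u with i | i <;> rcases v with i' | i' <;>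
      simp only [fc, Sum.elim_inl, Sum.elim_inr, Fin.mk.injEq] at huv
    · exact congrArg Sum.inl (Fin.ext (by omega))
    · exfalso; have := i'.isLt; omega
    · exfalso; have := i.isLt; omega
    · exact congrArg Sum.inr (Fin.ext (by omega))
  apply det_ne_zero_of_submatrix _ (sumEquiv fr hba hfr) (sumEquiv fc hba hfc)
  have hN : M.submatrix (sumEquiv fr hba hfr) (sumEquiv fc hba hfc) = fromBlocks
      (Matrix.of fun r c : Fin b => y c ^ (r : ℕ))
      ((M.submatrix (sumEquiv fr hba hfr) (sumEquiv fc hba hfc)).toBlocks₁₂) 0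
      (Matrix.of fun r c : Fin a => x c ^ ((r : ℕ) + 1)) := by
    ext i jj
    rcases i with r | r <;> rcases jj with c | c
    · -- block 11 : special rows, y-columns
      have hrv : ((sumEquiv fr hba hfr (Sum.inl r) : Fin k) : ℕ)
          = if (r : ℕ) = 0 then 0 else a + (r : ℕ) := rfl
      have hcv : ((sumEquiv fc hba hfc (Sum.inl c) : Fin k) : ℕ) = a + (c : ℕ) := rfl
      rw [Matrix.submatrix_apply, Matrix.fromBlocks_apply₁₁, hMy _ _ (by rw [hcv]; omega)]
      by_cases hr0 : (r : ℕ) = 0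
      · rw [if_pos (by rw [hrv, if_pos hr0]; omega)]
        rw [Matrix.of_apply, hrv, if_pos hr0, hr0]
        norm_num
      · rw [if_neg (by rw [hrv, if_neg hr0]; omega)]
        rw [Matrix.of_apply, hrv, if_neg hr0,
          show a + (r : ℕ) - (k - j) = (r : ℕ) from by omega]
        refine congrArg (· ^ (r : ℕ)) ?_
        exact congrArg y (Fin.ext (by rw [Fin.val_mk, hcv]; omega))
    · -- block 12
      simp [Matrix.toBlocks₁₂]
    · -- block 21 : shifted rows, y-columns : zero
      have hrv : ((sumEquiv fr hba hfr (Sum.inr r) : Fin k) : ℕ) = (r : ℕ) + 1 := rfl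
      have hcv : ((sumEquiv fc hba hfc (Sum.inl c) : Fin k) : ℕ) = a + (c : ℕ) := rfl
      rw [Matrix.submatrix_apply, Matrix.fromBlocks_apply₂₁, hMy _ _ (by rw [hcv]; omega),
        if_pos (by rw [hrv]; have := r.isLt; omega)]
      rw [Matrix.zero_apply, hrv]
      exact zero_pow (by omega)
    · -- block 22 : shifted rows, x-columns
      have hrv : ((sumEquiv fr hba hfr (Sum.inr r) : Fin k) : ℕ) = (r : ℕ) + 1 := rfl
      have hcv : ((sumEquiv fc hba hfc (Sum.inr c) : Fin k) : ℕ) = (c : ℕ) := rfl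
      rw [Matrix.submatrix_apply, Matrix.fromBlocks_apply₂₂, hMx _ _ (by rw [hcv]; exact c.isLt),
        if_pos (by rw [hrv]; have := r.isLt; omega)]
      rw [Matrix.of_apply, hrv]
      refine congrArg (· ^ ((r : ℕ) + 1)) ?_
      exact congrArg x (Fin.ext (by rw [Fin.val_mk, hcv]))
  rw [hN, Matrix.det_fromBlocks_zero₂₁]
  refine mul_ne_zero ?_ ?_
  · have hA : (Matrix.of fun r c : Fin b => y c ^ (r : ℕ)) = (Matrix.vandermonde y)ᵀ := by
      ext i jj; simp [Matrix.vandermonde]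
    rw [hA, Matrix.det_transpose]
    exact Matrix.det_vandermonde_ne_zero_iff.2 hyinj
  · have hD : (Matrix.of fun r c : Fin a => x c ^ ((r : ℕ) + 1)) =
        Matrix.of (fun r c : Fin a => x c * (Matrix.vandermonde x)ᵀ r c) := by
      ext i jj; simp [Matrix.vandermonde, pow_succ]; ring
    rw [hD, Matrix.det_mul_row, Matrix.det_transpose]
    exact mul_ne_zero (Finset.prod_ne_zero_iff.2 fun i _ => hx0 i)
      (Matrix.det_vandermonde_ne_zero_iff.2 hxinj)


/-- for a configuration of `a` distinct nonzero points on the `x`-axis and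
`b` distinct nonzero points on the `y`-axis of the nodal curve `xy = 0` (`a + b = k ≥ 2`),
the mixed Vandermonde matrix `Vᵏⱼ` (columns `(1, x, …, x^{k-j}, y, …, y^{j-1})ᵀ` evaluated
at the `k` points) has nonzero determinant if and only if `j = b` or `j = b + 1`. -/
theorem stmt_14 (k a b j : ℕ) (hk : 2 ≤ k) (hab : a + b = k) (hj1 : 1 ≤ j) (hjk : j ≤ k)
    (x : Fin a → ℂ) (y : Fin b → ℂ)
    (hxinj : Function.Injective x) (hyinj : Function.Injective y)
    (hx0 : ∀ l, x l ≠ 0) (hy0 : ∀ l, y l ≠ 0)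
    (p : Fin k → ℂ × ℂ)
    (hp : ∀ c : Fin k, p c = if h : (c : ℕ) < a then (x ⟨c, h⟩, 0)
      else (0, y ⟨(c : ℕ) - a, by omega⟩)) :
    (Matrix.of fun r c : Fin k =>
        if (r : ℕ) ≤ k - j then (p c).1 ^ (r : ℕ) else (p c).2 ^ ((r : ℕ) - (k - j))).det ≠ 0
      ↔ (j = b ∨ j = b + 1) := by
  have hpx : ∀ (c : Fin k) (h : (c : ℕ) < a), p c = (x ⟨c, h⟩, 0) := by
    intro c h; rw [hp, dif_pos h]
  have hpy : ∀ (c : Fin k) (h : ¬ ((c : ℕ) < a)), p c = (0, y ⟨(c : ℕ) - a, by omega⟩) := by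
    intro c h; rw [hp, dif_neg h]
  constructor
  · intro hdet
    by_contra hcon
    push_neg at hcon
    exact hdet (stmt_14' k a b j hk hab hj1 hjk x y hxinj hyinj hx0 hy0 p hp (by omega))
  · rintro (hj | hj)
    · exact stmt_14b k a b j hk hab hj1 hjk x y hxinj hyinj hx0 hy0 p hpx hpy hj
    · exact stmt_14c k a b j hk hab hj1 hjk x y hxinj hyinj hx0 hy0 p hpx hpy hj
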